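/- arXiv:0907.4757 — 4 statements merged into one kernel-verified Lean document; each statement's English description precedes it below -/
import Mathlib

section
/- Let a and b be finite nonempty types and let ψ : a × b → ℂ be a unit vector (∑_{(i,k)} ‖ψ (i,k)‖² = 1) with density matrix ρ = |ψ⟩⟨ψ|. Then the von Neumann entropy of the partial trace of ρ over b equals the von Neumann entropy of the partial trace of ρ over a: S(tr_b ρ) = S(tr_a ρ). (This is the fact, used throughout the combing protocol, that for a pure state |φ⟩_{X,Y} one has S(X) = S(Y).) -/
set_option synthInstance.maxHeartbeats 1000000
set_option maxHeartbeats 1000000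

/-- The density matrix `|ψ⟩⟨ψ|` of a vector `ψ`. -/
noncomputable def densityMatrix {n : Type} [Fintype n] (ψ : n → ℂ) : Matrix n n ℂ :=
  fun i j => ψ i * star (ψ j)

/-- Partial trace over the second tensor factor. -/
noncomputable def ptraceB {a b : Type} [Fintype a] [Fintype b]
    (ρ : Matrix (a × b) (a × b) ℂ) : Matrix a a ℂ :=
  fun i j => ∑ k : b, ρ (i, k) (j, k)

/-- Partial trace over the first tensor factor. -/
noncomputable def ptraceA {a b : Type} [Fintype a] [Fintype b]
    (ρ : Matrix (a × b) (a × b) ℂ) : Matrix b b ℂ :=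
  fun k l => ∑ i : a, ρ (i, k) (i, l)

/-- The von Neumann entropy of a Hermitian matrix, `S(σ) = ∑ᵢ -λᵢ log λᵢ`. -/
noncomputable def vonNeumannEntropy {n : Type} [Fintype n] [DecidableEq n]
    {σ : Matrix n n ℂ} (hσ : σ.IsHermitian) : ℝ :=
  ∑ i, Real.negMulLog (hσ.eigenvalues i)

open Matrix Polynomial


lemma det_smul_one_sub_mul_comm {K : Type*} [Field K] {m n : Type*}
    [Fintype m] [Fintype n] [DecidableEq m] [DecidableEq n]
    (t : K) (ht : t ≠ 0) (M : Matrix m n K) (N : Matrix n m K) :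
    det (t • (1 : Matrix m m K) - M * N) * t ^ Fintype.card n =
    det (t • (1 : Matrix n n K) - N * M) * t ^ Fintype.card m := by
  letI : Invertible (t • (1 : Matrix m m K)) :=
    ⟨t⁻¹ • (1 : Matrix m m K), by rw [smul_mul_smul_comm]; simp [inv_mul_cancel₀ ht],
      by rw [smul_mul_smul_comm]; simp [mul_inv_cancel₀ ht]⟩
  have hinv : ⅟(t • (1 : Matrix m m K)) = t⁻¹ • (1 : Matrix m m K) := rfl
  have h1 : det (fromBlocks (t • (1 : Matrix m m K)) M N (1 : Matrix n n K))
      = det (t • (1 : Matrix m m K) - M * N) := by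
    simpa using det_fromBlocks_one₂₂ (t • (1 : Matrix m m K)) M N
  have h2 : det (fromBlocks (t • (1 : Matrix m m K)) M N (1 : Matrix n n K))
      = t ^ Fintype.card m * det ((1 : Matrix n n K) - t⁻¹ • (N * M)) := by
    rw [det_fromBlocks₁₁, hinv]
    congr 1
    · simp [det_smul]
    · congr 1
      simp [Matrix.mul_smul, Matrix.smul_mul, Matrix.mul_one]
  have h3 : det (t • (1 : Matrix n n K) - N * M)
      = t ^ Fintype.card n * det ((1 : Matrix n n K) - t⁻¹ • (N * M)) := by
    rw [← det_smul]
    congr 1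
    rw [smul_sub, smul_smul, mul_inv_cancel₀ ht, one_smul]
  rw [← h1, h2, h3]
  ring

lemma charmatrix_det_map {F : Type*} [Field F] {m : Type*} [Fintype m] [DecidableEq m]
    (P : Matrix m m F) (φ : F[X] →+* RatFunc F) :
    φ P.charpoly = det (φ X • (1 : Matrix m m (RatFunc F)) - P.map (φ.comp C)) := by
  rw [Matrix.charpoly, RingHom.map_det]
  congr 1
  ext i j
  by_cases h : i = j <;>
    simp [h, charmatrix_apply, Matrix.map_apply, Matrix.one_apply, diagonal_apply,
      Matrix.sub_apply, Matrix.smul_apply, smul_eq_mul]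

lemma charpoly_mul_comm_rect {F : Type*} [Field F] {m n : Type*}
    [Fintype m] [Fintype n] [DecidableEq m] [DecidableEq n]
    (M : Matrix m n F) (N : Matrix n m F) :
    (M * N).charpoly * X ^ Fintype.card n = (N * M).charpoly * X ^ Fintype.card m := by
  apply RatFunc.algebraMap_injective F
  have hφ := RatFunc.algebraMap_injective F
  set φ : F[X] →+* RatFunc F := (algebraMap F[X] (RatFunc F) : F[X] →+* RatFunc F) with hφdef
  have ht : φ X ≠ 0 := fun h => X_ne_zero (hφ (by simpa using h))
  have hm1 : (M * N).map (φ.comp C) = M.map (φ.comp C) * N.map (φ.comp C) := Matrix.map_mul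
  have hm2 : (N * M).map (φ.comp C) = N.map (φ.comp C) * M.map (φ.comp C) := Matrix.map_mul
  simp only [_root_.map_mul, map_pow, charmatrix_det_map, hm1, hm2]
  exact det_smul_one_sub_mul_comm (φ X) ht (M.map (φ.comp C)) (N.map (φ.comp C))

lemma charpoly_transpose' {F : Type*} [CommRing F] {m : Type*} [Fintype m] [DecidableEq m]
    (P : Matrix m m F) : P.transpose.charpoly = P.charpoly := by
  rw [Matrix.charpoly, Matrix.charpoly, ← Matrix.det_transpose (charmatrix P)]
  congr 1
  ext i j
  by_cases h : i = j <;>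
    simp [h, charmatrix_apply, Matrix.transpose_apply, diagonal_apply, eq_comm]

lemma charpoly_hermitian {n : Type*} [Fintype n] [DecidableEq n]
    {H : Matrix n n ℂ} (hH : H.IsHermitian) :
    H.charpoly = ∏ i, (X - C ((hH.eigenvalues i : ℝ) : ℂ)) := by
  set V : Matrix n n ℂ := (hH.eigenvectorUnitary : Matrix n n ℂ)
  have hV1 : V * star V = 1 := (Matrix.mem_unitaryGroup_iff).mp hH.eigenvectorUnitary.2
  have hV2 : star V * V = 1 := (Matrix.mem_unitaryGroup_iff').mp hH.eigenvectorUnitary.2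
  set D : Matrix n n ℂ := diagonal (RCLike.ofReal ∘ hH.eigenvalues)
  have hspec : H = V * D * star V := hH.spectral_theorem
  have hc : charmatrix H = (V.map C) * charmatrix D * ((star V).map C) := by
    have hmul : ∀ (A B : Matrix n n ℂ), (A * B).map (C : ℂ →+* ℂ[X]) = A.map C * B.map C :=
      fun A B => Matrix.map_mul
    have hscal : (V.map C) * ((X : ℂ[X]) • (1 : Matrix n n ℂ[X])) * ((star V).map C)
        = (X : ℂ[X]) • (1 : Matrix n n ℂ[X]) := by
      rw [Matrix.mul_smul, Matrix.mul_one, Matrix.smul_mul, ← hmul, hV1]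
      simp
    have hSm : (Matrix.scalar n) (X : ℂ[X]) = (X : ℂ[X]) • (1 : Matrix n n ℂ[X]) := by
      ext i j
      by_cases h : i = j <;>
        simp [h, Matrix.scalar_apply, diagonal_apply, Matrix.smul_apply, Matrix.one_apply]
    show (Matrix.scalar n) (X : ℂ[X]) - C.mapMatrix H
        = V.map C * ((Matrix.scalar n) (X : ℂ[X]) - C.mapMatrix D) * (star V).map C
    rw [Matrix.mul_sub, Matrix.sub_mul, hSm, hscal]
    congr 1
    rw [hspec]
    show (V * D * star V).map (C : ℂ →+* ℂ[X]) = V.map C * D.map C * (star V).map C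
    rw [hmul, hmul]
  have hdetV : det (V.map C) * det ((star V).map C) = 1 := by
    rw [← det_mul, ← Matrix.map_mul, hV1]
    simp
  rw [Matrix.charpoly, hc, det_mul, det_mul]
  have : det (V.map C) * det (charmatrix D) * det ((star V).map C)
      = (det (V.map C) * det ((star V).map C)) * det (charmatrix D) := by ring
  rw [this, hdetV, one_mul]
  have : charmatrix D = diagonal (fun i => (X : ℂ[X]) - C ((hH.eigenvalues i : ℝ) : ℂ)) := by
    ext i j
    by_cases h : i = j <;> simp [h, charmatrix_apply, D, diagonal_apply]
  show det (charmatrix D) = _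
  rw [this, det_diagonal]
lemma prod_roots_aux {n : Type} [Fintype n] [DecidableEq n] (f : n → ℂ) :
    (∏ i, ((X : ℂ[X]) - C (f i))).roots = Finset.univ.val.map f := by
  have h1 : Multiset.map (fun i => (X : ℂ[X]) - C (f i)) Finset.univ.val
      = Multiset.map (fun z => (X : ℂ[X]) - C z) (Finset.univ.val.map f) := by
    rw [Multiset.map_map]; rfl
  rw [Finset.prod, h1, roots_multiset_prod_X_sub_C]

/-- For a pure bipartite state, the entropies of the two marginals coincide. -/
theorem entropy_ptraceB_eq_entropy_ptraceA
    {a b : Type} [Fintype a] [DecidableEq a] [Nonempty a]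
    [Fintype b] [DecidableEq b] [Nonempty b]
    (ψ : a × b → ℂ) (hψ : ∑ x, ‖ψ x‖ ^ 2 = 1)
    (hA : (ptraceB (densityMatrix ψ)).IsHermitian)
    (hB : (ptraceA (densityMatrix ψ)).IsHermitian) :
    vonNeumannEntropy hA = vonNeumannEntropy hB := by
  set M : Matrix a b ℂ := Matrix.of fun i k => ψ (i, k) with hM
  have hAeq : ptraceB (densityMatrix ψ) = M * Mᴴ := by
    ext i j
    simp [ptraceB, densityMatrix, Matrix.mul_apply, Matrix.conjTranspose_apply, hM]
  have hBeq : ptraceA (densityMatrix ψ) = (Mᴴ * M)ᵀ := by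
    ext k l
    simp only [ptraceA, densityMatrix, Matrix.transpose_apply, Matrix.mul_apply,
      Matrix.conjTranspose_apply, hM, Matrix.of_apply]
    exact Finset.sum_congr rfl fun i _ => mul_comm _ _
  have hkey : (M * Mᴴ).charpoly * X ^ Fintype.card b
      = (Mᴴ * M).charpoly * X ^ Fintype.card a := charpoly_mul_comm_rect M Mᴴ
  have hpa : (ptraceB (densityMatrix ψ)).charpoly
      = ∏ i, ((X : ℂ[X]) - C ((hA.eigenvalues i : ℝ) : ℂ)) := charpoly_hermitian hA
  have hpb : (ptraceA (densityMatrix ψ)).charpoly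
      = ∏ i, ((X : ℂ[X]) - C ((hB.eigenvalues i : ℝ) : ℂ)) := charpoly_hermitian hB
  have hpa' : (M * Mᴴ).charpoly = ∏ i, ((X : ℂ[X]) - C ((hA.eigenvalues i : ℝ) : ℂ)) := by
    rw [← hAeq]; exact hpa
  have hpb' : (Mᴴ * M).charpoly = ∏ i, ((X : ℂ[X]) - C ((hB.eigenvalues i : ℝ) : ℂ)) := by
    rw [← charpoly_transpose' (Mᴴ * M), ← hBeq]; exact hpb
  -- multiset equality of roots
  set fA : a → ℂ := fun i => ((hA.eigenvalues i : ℝ) : ℂ)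
  set fB : b → ℂ := fun k => ((hB.eigenvalues k : ℝ) : ℂ)
  have hmonA : (∏ i, ((X : ℂ[X]) - C (fA i))).Monic :=
    monic_prod_of_monic _ _ fun i _ => monic_X_sub_C _
  have hmonB : (∏ i, ((X : ℂ[X]) - C (fB i))).Monic :=
    monic_prod_of_monic _ _ fun i _ => monic_X_sub_C _
  have hne1 : (∏ i, ((X : ℂ[X]) - C (fA i))) * X ^ Fintype.card b ≠ 0 :=
    mul_ne_zero hmonA.ne_zero (pow_ne_zero _ X_ne_zero)
  have hne2 : (∏ i, ((X : ℂ[X]) - C (fB i))) * X ^ Fintype.card a ≠ 0 :=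
    mul_ne_zero hmonB.ne_zero (pow_ne_zero _ X_ne_zero)
  have hkey' : (∏ i, ((X : ℂ[X]) - C (fA i))) * X ^ Fintype.card b
      = (∏ i, ((X : ℂ[X]) - C (fB i))) * X ^ Fintype.card a := by
    rw [← hpa', ← hpb']; exact hkey
  have hroots : Finset.univ.val.map fA + Fintype.card b • ({0} : Multiset ℂ)
      = Finset.univ.val.map fB + Fintype.card a • ({0} : Multiset ℂ) := by
    have := congrArg Polynomial.roots hkey'
    rwa [roots_mul hne1, roots_mul hne2, roots_pow, roots_pow, roots_X,
      prod_roots_aux, prod_roots_aux] at this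
  -- apply negMulLog ∘ re and sum
  set g : ℂ → ℝ := fun z => Real.negMulLog z.re with hg
  have hsum := congrArg (fun s : Multiset ℂ => (s.map g).sum) hroots
  simp only [Multiset.map_add, Multiset.sum_add, Multiset.map_nsmul, Multiset.map_singleton,
    Multiset.sum_nsmul, Multiset.sum_singleton, Multiset.map_map] at hsum
  have hg0 : g 0 = 0 := by simp [hg, Real.negMulLog_zero]
  rw [hg0, smul_zero, smul_zero, add_zero, add_zero] at hsum
  have hfa : g ∘ fA = fun i => Real.negMulLog (hA.eigenvalues i) := by
    funext i; simp [g, fA]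
  have hfb : g ∘ fB = fun k => Real.negMulLog (hB.eigenvalues k) := by
    funext k; simp [g, fB]
  have hA' : vonNeumannEntropy hA = (Finset.univ.val.map (g ∘ fA)).sum := by
    rw [hfa]; rfl
  have hB' : vonNeumannEntropy hB = (Finset.univ.val.map (g ∘ fB)).sum := by
    rw [hfb]; rfl
  rw [hA', hB', hsum]
end

section
/- Let A and B₁, …, B_m (m ≥ 1) be finite nonempty types and let ψ be a unit vector on A × (B₁ × ⋯ × B_m) with density matrix ρ = |ψ⟩⟨ψ|. For each permutation σ of Fin m define the vector E^σ ∈ ℝ^m by E^σ_{σ(k)} := S(ρ_{B_{σ(1)} ⋯ B_{σ(k)}}) − S(ρ_{B_{σ(1)} ⋯ B_{σ(k−1)}}) for k = 1, …, m (where S(ρ_∅) = 0 and ρ_T denotes the reduction of ρ onto the Bobs indexed by T). Then every point v in the convex hull (over ℝ) of the finite set {E^σ : σ a permutation of Fin m} satisfies ∑_{k=1}^m v_k = S(ρ_A). (Thus the outer polytope F′ of achievable entanglement distributions in entanglement combing lies in the hyperplane of total entanglement S(A).) -/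
open Polynomial Matrix Finset

section Aux

variable {n p : Type} [Fintype n] [Fintype p] [DecidableEq n] [DecidableEq p]

lemma det_smul_one_sub_mul_comm' {S : Type*} [CommRing S] (x : S)
    (A : Matrix n p S) (B : Matrix p n S) :
    (x • (1 : Matrix n n S) - A * B).det * x ^ Fintype.card p
      = x ^ Fintype.card n * (x • (1 : Matrix p p S) - B * A).det := by
  have h1 : fromBlocks (1 : Matrix n n S) 0 (-B) (x • (1 : Matrix p p S))
        * fromBlocks (x • (1 : Matrix n n S)) A B 1
      = fromBlocks (x • (1 : Matrix n n S)) A 0 (x • (1 : Matrix p p S) - B * A) := by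
    rw [fromBlocks_multiply]
    congr 1 <;> simp [Matrix.mul_smul, Matrix.smul_mul, sub_eq_add_neg, add_comm]
  have h2 : fromBlocks (x • (1 : Matrix n n S)) A B 1
        * fromBlocks (1 : Matrix n n S) 0 (-B) 1
      = fromBlocks (x • (1 : Matrix n n S) - A * B) A 0 1 := by
    rw [fromBlocks_multiply]
    congr 1 <;> simp [Matrix.mul_smul, Matrix.smul_mul, sub_eq_add_neg]
  have d1 := congrArg Matrix.det h1
  have d2 := congrArg Matrix.det h2
  rw [det_mul, det_fromBlocks_zero₁₂, det_fromBlocks_zero₂₁] at d1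
  rw [det_mul, det_fromBlocks_zero₁₂, det_fromBlocks_zero₂₁] at d2
  simp only [det_one, one_mul, mul_one, det_smul, det_one] at d1 d2
  rw [mul_comm] at d1
  rw [d2] at d1
  linear_combination d1

lemma charmatrix_eq_smul' (M : Matrix n n ℂ) :
    charmatrix M = (X : ℂ[X]) • (1 : Matrix n n ℂ[X]) - M.map C := by
  rw [charmatrix, smul_one_eq_diagonal, scalar_apply]; rfl

lemma charpoly_mul_comm_pow' (A : Matrix n p ℂ) (B : Matrix p n ℂ) :
    (A * B).charpoly * X ^ Fintype.card p = X ^ Fintype.card n * (B * A).charpoly := by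
  rw [Matrix.charpoly, Matrix.charpoly, charmatrix_eq_smul', charmatrix_eq_smul']
  rw [show (A * B).map C = A.map C * B.map C from Matrix.map_mul,
    show (B * A).map C = B.map C * A.map C from Matrix.map_mul]
  exact det_smul_one_sub_mul_comm' X (A.map C) (B.map C)

lemma charpoly_hermitian' {M : Matrix n n ℂ} (hM : M.IsHermitian) :
    M.charpoly = ∏ i, (X - C ((hM.eigenvalues i : ℝ) : ℂ)) := by
  set U : Matrix n n ℂ := (hM.eigenvectorUnitary : Matrix n n ℂ) with hU
  set D : Matrix n n ℂ := diagonal (RCLike.ofReal ∘ hM.eigenvalues) with hD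
  have hUU : U * star U = 1 := Matrix.mem_unitaryGroup_iff.mp hM.eigenvectorUnitary.2
  have h1 : M.charpoly = D.charpoly := by
    conv_lhs => rw [Matrix.charpoly, hM.spectral_theorem, Unitary.conjStarAlgAut_apply, ← hU, ← hD]
    have hcm : charmatrix (U * D * star U) = U.map C * charmatrix D * (star U).map C := by
      rw [charmatrix, charmatrix]
      have hsc : U.map C * Matrix.scalar n (X : ℂ[X]) * (star U).map C
          = Matrix.scalar n (X : ℂ[X]) := by
        rw [scalar_apply, ← smul_one_eq_diagonal, Matrix.mul_smul, Matrix.smul_mul,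
          mul_one, ← Matrix.map_mul, hUU, Matrix.map_one _ (map_zero C) (map_one C)]
      rw [Matrix.mul_sub, Matrix.sub_mul, hsc]
      congr 1
      simp [RingHom.mapMatrix_apply, ← Matrix.map_mul]
    rw [hcm, det_mul, det_mul, mul_comm, ← mul_assoc, ← det_mul, ← Matrix.map_mul]
    rw [show star U * U = 1 from Matrix.mem_unitaryGroup_iff'.mp hM.eigenvectorUnitary.2]
    simp [Matrix.charpoly]
  rw [h1, Matrix.charpoly]
  have : charmatrix D = diagonal (fun i => (X : ℂ[X]) - C ((hM.eigenvalues i : ℝ) : ℂ)) := by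
    ext i j
    by_cases h : i = j
    · subst h; simp [charmatrix_apply_eq, hD, diagonal_apply_eq]
    · simp [charmatrix_apply_ne _ _ _ h, hD, diagonal_apply_ne _ h]
  rw [this, det_diagonal]

lemma roots_charpoly_hermitian' {M : Matrix n n ℂ} (hM : M.IsHermitian) :
    M.charpoly.roots = Finset.univ.val.map (fun i => ((hM.eigenvalues i : ℝ) : ℂ)) := by
  rw [charpoly_hermitian' hM, ← Polynomial.roots_multiset_prod_X_sub_C
    (Finset.univ.val.map (fun i => ((hM.eigenvalues i : ℝ) : ℂ)))]
  congr 1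
  rw [Multiset.map_map, Finset.prod_eq_multiset_prod]
  rfl

lemma entropy_eq_roots' {M : Matrix n n ℂ} (hM : M.IsHermitian) :
    ∑ i, Real.negMulLog (hM.eigenvalues i)
      = (M.charpoly.roots.map (fun z : ℂ => Real.negMulLog z.re)).sum := by
  rw [roots_charpoly_hermitian' hM, Multiset.map_map, Finset.sum_eq_multiset_sum]
  simp

lemma sum_eigenvalues_eq_trace' {M : Matrix n n ℂ} (hM : M.IsHermitian) :
    ∑ i, ((hM.eigenvalues i : ℝ) : ℂ) = M.trace := by
  rw [Matrix.trace_eq_sum_roots_charpoly, roots_charpoly_hermitian' hM,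
    Finset.sum_eq_multiset_sum]

lemma rootsum_mul_comm' (A : Matrix n p ℂ) (B : Matrix p n ℂ) :
    ((A * B).charpoly.roots.map (fun z : ℂ => Real.negMulLog z.re)).sum
      = ((B * A).charpoly.roots.map (fun z : ℂ => Real.negMulLog z.re)).sum := by
  have hroots := congrArg Polynomial.roots (charpoly_mul_comm_pow' A B)
  rw [Polynomial.roots_mul (mul_ne_zero (A * B).charpoly_monic.ne_zero
      (pow_ne_zero _ Polynomial.X_ne_zero)),
    Polynomial.roots_mul (mul_ne_zero (pow_ne_zero _ Polynomial.X_ne_zero)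
      (B * A).charpoly_monic.ne_zero),
    Polynomial.roots_pow, Polynomial.roots_X] at hroots
  have hsum := congrArg (fun s : Multiset ℂ =>
    (s.map (fun z : ℂ => Real.negMulLog z.re)).sum) hroots
  simpa [Multiset.nsmul_singleton, Multiset.map_replicate, Multiset.sum_replicate,
    Real.negMulLog_zero] using hsum

lemma charpoly_transpose'_s3 (M : Matrix n n ℂ) : Mᵀ.charpoly = M.charpoly := by
  rw [Matrix.charpoly, Matrix.charpoly, ← Matrix.det_transpose (charmatrix M)]
  congr 1
  rw [charmatrix_eq_smul', charmatrix_eq_smul', Matrix.transpose_sub, Matrix.transpose_smul,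
    Matrix.transpose_one, Matrix.transpose_map]

end Aux


/-- The function on `Fin m` agreeing with `x` on `T` and with `z` outside `T`. -/
def mergeOn {ι : Type} [DecidableEq ι] {d : ι → Type} (T : Finset ι)
    (x : ∀ i : {i // i ∈ T}, d i) (z : ∀ i : {i // i ∉ T}, d i) : ∀ i, d i :=
  fun i => if h : i ∈ T then x ⟨i, h⟩ else z ⟨i, h⟩

/-- The reduction of a state on `A × (B₁ × ⋯ × B_m)` onto the Bobs indexed by `T`:
all other systems (Alice and the remaining Bobs) are traced out. -/
noncomputable def reduceBobs {A : Type} [Fintype A] {m : ℕ} {B : Fin m → Type}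
    [∀ k, Fintype (B k)] [∀ k, DecidableEq (B k)]
    (ρ : Matrix (A × ∀ k, B k) (A × ∀ k, B k) ℂ) (T : Finset (Fin m)) :
    Matrix (∀ k : {k // k ∈ T}, B k) (∀ k : {k // k ∈ T}, B k) ℂ :=
  fun x y => ∑ a : A, ∑ z : ∀ k : {k // k ∉ T}, B k,
    ρ (a, mergeOn T x z) (a, mergeOn T y z)

/-- The reduction of a state on `A × (B₁ × ⋯ × B_m)` onto Alice's system `A`. -/
noncomputable def reduceA {A : Type} [Fintype A] {m : ℕ} {B : Fin m → Type}
    [∀ k, Fintype (B k)]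
    (ρ : Matrix (A × ∀ k, B k) (A × ∀ k, B k) ℂ) : Matrix A A ℂ :=
  fun a a' => ∑ b : ∀ k, B k, ρ (a, b) (a', b)

/-- Every point of the convex hull of the extreme points `E^σ`, obtained by merging
the Bobs to Alice in the order prescribed by a permutation `σ`, has coordinate sum
equal to `S(ρ_A)`: the outer combing polytope lies in the hyperplane of total
entanglement `S(A)`. -/
theorem convexHull_merging_points_subset_hyperplane
    {A : Type} [Fintype A] [DecidableEq A] [Nonempty A]
    {m : ℕ} (hm : 1 ≤ m) {B : Fin m → Type}
    [∀ k, Fintype (B k)] [∀ k, DecidableEq (B k)] [∀ k, Nonempty (B k)]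
    (ψ : A × (∀ k, B k) → ℂ) (hψ : ∑ x, ‖ψ x‖ ^ 2 = 1)
    (hs : ∀ T : Finset (Fin m), (reduceBobs (densityMatrix ψ) T).IsHermitian)
    (hA : (reduceA (densityMatrix ψ)).IsHermitian) :
    ∀ v ∈ convexHull ℝ (Set.range fun σ : Equiv.Perm (Fin m) => fun j : Fin m =>
        vonNeumannEntropy (hs (Finset.univ.filter fun i : Fin m => σ.symm i ≤ σ.symm j)) -
          vonNeumannEntropy (hs (Finset.univ.filter fun i : Fin m => σ.symm i < σ.symm j))),
      ∑ k, v k = vonNeumannEntropy hA := by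
  classical
  set F : Finset (Fin m) → ℝ := fun T => vonNeumannEntropy (hs T) with hF
  -- the empty reduction has entropy 0
  have hempty : F ∅ = 0 := by
    haveI hE : IsEmpty {k // k ∈ (∅ : Finset (Fin m))} :=
      ⟨fun k => Finset.notMem_empty _ k.2⟩
    let eqv : (∀ k : {k // k ∉ (∅ : Finset (Fin m))}, B k) ≃ (∀ k, B k) :=
      { toFun := fun z i => z ⟨i, Finset.notMem_empty i⟩,
        invFun := fun b k => b k.1,
        left_inv := fun z => rfl,
        right_inv := fun b => rfl }
    have hme : ∀ (x : ∀ k : {k // k ∈ (∅ : Finset (Fin m))}, B k)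
        (z : ∀ k : {k // k ∉ (∅ : Finset (Fin m))}, B k),
        mergeOn (∅ : Finset (Fin m)) x z = eqv z := by
      intro x z
      funext i
      simp only [mergeOn]
      rw [dif_neg (Finset.notMem_empty i)]
      rfl
    have htr : (reduceBobs (densityMatrix ψ) ∅).trace = 1 := by
      rw [Matrix.trace, Fintype.sum_unique]
      show ∑ a : A, ∑ z : ∀ k : {k // k ∉ (∅ : Finset (Fin m))}, B k,
        densityMatrix ψ (a, mergeOn ∅ default z) (a, mergeOn ∅ default z)
        = 1
      simp only [densityMatrix]
      have hstep : ∀ a : A,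
          ∑ z : ∀ k : {k // k ∉ (∅ : Finset (Fin m))}, B k,
            ψ (a, mergeOn ∅ default z) * star (ψ (a, mergeOn ∅ default z))
          = ∑ b : ∀ k, B k, ψ (a, b) * star (ψ (a, b)) := by
        intro a
        rw [← Equiv.sum_comp eqv (fun b => ψ (a, b) * star (ψ (a, b)))]
        exact Finset.sum_congr rfl fun z _ => by rw [hme default z]
      rw [Finset.sum_congr rfl fun a _ => hstep a,
        ← Fintype.sum_prod_type (f := fun x : A × (∀ k, B k) => ψ x * star (ψ x))]
      have h2 : ∀ w : ℂ, w * star w = ((‖w‖ ^ 2 : ℝ) : ℂ) := fun w => by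
        rw [RCLike.star_def, RCLike.mul_conj, ← RCLike.ofReal_pow]
        rfl
      rw [Finset.sum_congr rfl fun x _ => h2 (ψ x)]
      rw [show (1 : ℂ) = ((1 : ℝ) : ℂ) from by norm_num, ← hψ]
      push_cast
      rfl
    have heig : (hs ∅).eigenvalues default = 1 := by
      have := sum_eigenvalues_eq_trace' (hs ∅)
      rw [htr, Fintype.sum_unique] at this
      exact_mod_cast this
    rw [hF]
    show vonNeumannEntropy (hs ∅) = 0
    rw [vonNeumannEntropy, Fintype.sum_unique, heig]
    simp [Real.negMulLog, Real.log_one]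
  -- the full reduction has entropy S(ρ_A)
  have hfull : F Finset.univ = vonNeumannEntropy hA := by
    haveI hE2 : IsEmpty {k // k ∉ (Finset.univ : Finset (Fin m))} :=
      ⟨fun k => k.2 (Finset.mem_univ k.1)⟩
    set N : Matrix (∀ k, B k) A ℂ := fun b a => ψ (a, b) with hN
    let E : (∀ k : {k // k ∈ (Finset.univ : Finset (Fin m))}, B k) ≃ (∀ k, B k) :=
      { toFun := fun x i => x ⟨i, Finset.mem_univ i⟩,
        invFun := fun b k => b k.1,
        left_inv := fun x => rfl,
        right_inv := fun b => rfl }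
    have hmx : ∀ (x : ∀ k : {k // k ∈ (Finset.univ : Finset (Fin m))}, B k)
        (z : ∀ k : {k // k ∉ (Finset.univ : Finset (Fin m))}, B k),
        mergeOn Finset.univ x z = E x := by
      intro x z
      funext i
      simp only [mergeOn]
      rw [dif_pos (Finset.mem_univ i)]
      rfl
    have h1 : reduceBobs (densityMatrix ψ) Finset.univ
        = (Matrix.reindex E.symm E.symm) (N * Nᴴ) := by
      ext x y
      simp only [Matrix.reindex_apply, Matrix.submatrix_apply, Equiv.symm_symm,
        Matrix.mul_apply, Matrix.conjTranspose_apply, reduceBobs, densityMatrix, hN]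
      refine Finset.sum_congr rfl fun a _ => ?_
      calc ∑ z : ∀ k : {k // k ∉ (Finset.univ : Finset (Fin m))}, B k,
            ψ (a, mergeOn Finset.univ x z) * star (ψ (a, mergeOn Finset.univ y z))
          = ∑ _z : ∀ k : {k // k ∉ (Finset.univ : Finset (Fin m))}, B k,
            ψ (a, E x) * star (ψ (a, E y)) :=
            Finset.sum_congr rfl fun z _ => by rw [hmx x z, hmx y z]
        _ = ψ (a, E x) * star (ψ (a, E y)) := Fintype.sum_unique _
    have h2 : reduceA (densityMatrix ψ) = (Nᴴ * N)ᵀ := by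
      ext a a'
      simp only [reduceA, densityMatrix, Matrix.transpose_apply, Matrix.mul_apply,
        Matrix.conjTranspose_apply, hN]
      exact Finset.sum_congr rfl fun b _ => mul_comm _ _
    show vonNeumannEntropy (hs Finset.univ) = vonNeumannEntropy hA
    rw [vonNeumannEntropy, vonNeumannEntropy, entropy_eq_roots' (hs Finset.univ),
      entropy_eq_roots' hA]
    have c1 : (reduceBobs (densityMatrix ψ) Finset.univ).charpoly = (N * Nᴴ).charpoly := by
      rw [h1]; exact Matrix.charpoly_reindex _ _
    have c2 : (reduceA (densityMatrix ψ)).charpoly = (Nᴴ * N).charpoly := by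
      rw [h2, charpoly_transpose'_s3]
    rw [c1, c2]
    exact rootsum_mul_comm' N Nᴴ
  -- each extreme point lies in the hyperplane
  have hsub : (Set.range fun σ : Equiv.Perm (Fin m) => fun j : Fin m =>
        vonNeumannEntropy (hs (Finset.univ.filter fun i : Fin m => σ.symm i ≤ σ.symm j)) -
          vonNeumannEntropy (hs (Finset.univ.filter fun i : Fin m => σ.symm i < σ.symm j)))
      ⊆ {w : Fin m → ℝ | ∑ k, w k = vonNeumannEntropy hA} := by
    rintro _ ⟨σ, rfl⟩
    show (∑ j, (vonNeumannEntropy (hs (Finset.univ.filter fun i : Fin m => σ.symm i ≤ σ.symm j)) -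
      vonNeumannEntropy (hs (Finset.univ.filter fun i : Fin m => σ.symm i < σ.symm j))))
      = vonNeumannEntropy hA
    set g : ℕ → ℝ := fun t => F (Finset.univ.filter fun i : Fin m => (σ.symm i : ℕ) < t) with hg
    have step : ∀ j : Fin m,
        vonNeumannEntropy (hs (Finset.univ.filter fun i : Fin m => σ.symm i ≤ σ.symm j)) -
          vonNeumannEntropy (hs (Finset.univ.filter fun i : Fin m => σ.symm i < σ.symm j))
        = g ((σ.symm j : ℕ) + 1) - g (σ.symm j : ℕ) := by
      intro j
      have e1 : (Finset.univ.filter fun i : Fin m => σ.symm i ≤ σ.symm j)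
          = (Finset.univ.filter fun i : Fin m => (σ.symm i : ℕ) < (σ.symm j : ℕ) + 1) := by
        ext i
        simp only [Finset.mem_filter, Finset.mem_univ, true_and, Fin.le_def, Nat.lt_succ_iff]
      have e2 : (Finset.univ.filter fun i : Fin m => σ.symm i < σ.symm j)
          = (Finset.univ.filter fun i : Fin m => (σ.symm i : ℕ) < (σ.symm j : ℕ)) := by
        ext i
        simp only [Finset.mem_filter, Finset.mem_univ, true_and, Fin.lt_def]
      rw [hg]
      show F _ - F _ = F _ - F _
      rw [e1, e2]
    rw [Finset.sum_congr rfl (fun j _ => step j)]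
    have hsum : ∑ j : Fin m, (g ((σ.symm j : ℕ) + 1) - g (σ.symm j : ℕ))
        = ∑ k : Fin m, (g ((k : ℕ) + 1) - g (k : ℕ)) :=
      Fintype.sum_equiv σ.symm _ _ (fun j => rfl)
    rw [hsum, Fin.sum_univ_eq_sum_range (fun k => g (k + 1) - g k), Finset.sum_range_sub g]
    have hgm : g m = F Finset.univ :=
      congrArg F (Finset.filter_true_of_mem fun i _ => (σ.symm i).isLt)
    have hg0 : g 0 = F ∅ :=
      congrArg F (Finset.filter_false_of_mem fun i _ => Nat.not_lt_zero _)
    rw [hgm, hg0, hempty, hfull, sub_zero]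
  intro v hv
  have hconv : Convex ℝ {w : Fin m → ℝ | ∑ k, w k = vonNeumannEntropy hA} :=
    convex_hyperplane (⟨fun a b => Finset.sum_add_distrib,
      fun c w => by simp [smul_eq_mul, Finset.mul_sum]⟩ : IsLinearMap ℝ fun w : Fin m → ℝ => ∑ k, w k) _
  exact convexHull_min hsub hconv hv
end

section
/- Let κ be a finite type and for each k : κ let ρ_k be a density matrix on a finite nonempty type d k. Then the iterated Kronecker product ⊗ₖ_{k : κ} ρ_k, indexed by ∀ k, d k, is a density matrix and S(⊗ₖ_{k} ρ_k) = ∑_{k} S(ρ_k). (This expresses that the final combed state |φ₁⟩_{A₁,B₁} ⊗ ⋯ ⊗ |φ_m⟩_{A_m,B_m} carries total entanglement ∑_k E_k = ∑_k S(ρ_{A_k}) between Alice and all Bobs.) -/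
open scoped ComplexOrder

/-- The iterated Kronecker product of the matrices `ρ k`, indexed by `∀ k, d k`,
with entries `(⊗ₖ_k ρ_k) x y = ∏ k, (ρ k) (x k) (y k)`. -/
noncomputable def piKronecker {κ : Type} [Fintype κ] {d : κ → Type}
    (ρ : ∀ k, Matrix (d k) (d k) ℂ) :
    Matrix (∀ k, d k) (∀ k, d k) ℂ :=
  fun x y => ∏ k, ρ k (x k) (y k)

open Matrix Polynomial
set_option maxRecDepth 8000
set_option linter.unusedSectionVars false

section auxPi
variable {κ : Type} [Fintype κ] [DecidableEq κ] {d : κ → Type}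
    [∀ k, Fintype (d k)] [∀ k, DecidableEq (d k)]

lemma sum_pi_prod (f : ∀ k, d k → ℂ) :
    ∑ x : ∀ k, d k, ∏ k, f k (x k) = ∏ k, ∑ i, f k i := by
  rw [Finset.prod_univ_sum, Fintype.piFinset_univ]

lemma sum_pi_prod_real (f : ∀ k, d k → ℝ) :
    ∑ x : ∀ k, d k, ∏ k, f k (x k) = ∏ k, ∑ i, f k i := by
  rw [Finset.prod_univ_sum, Fintype.piFinset_univ]

lemma piKronecker_mul (A B : ∀ k, Matrix (d k) (d k) ℂ) :
    piKronecker A * piKronecker B = piKronecker (fun k => A k * B k) := by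
  ext x y
  simp only [piKronecker, Matrix.mul_apply]
  rw [← sum_pi_prod fun k i => A k (x k) i * B k i (y k)]
  exact Finset.sum_congr rfl fun z _ => (Finset.prod_mul_distrib).symm

lemma piKronecker_diagonal (v : ∀ k, d k → ℂ) :
    piKronecker (fun k => diagonal (v k)) = diagonal (fun x : ∀ k, d k => ∏ k, v k (x k)) := by
  ext x y
  by_cases h : x = y
  · subst h; simp [piKronecker, diagonal_apply_eq]
  · obtain ⟨k, hk⟩ := Function.ne_iff.mp h
    rw [diagonal_apply_ne _ h]
    exact Finset.prod_eq_zero (Finset.mem_univ k) (diagonal_apply_ne _ hk)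

lemma piKronecker_conjTranspose (A : ∀ k, Matrix (d k) (d k) ℂ) :
    (piKronecker A)ᴴ = piKronecker (fun k => (A k)ᴴ) := by
  ext x y
  simp [piKronecker, conjTranspose_apply, map_prod]

lemma piKronecker_one :
    piKronecker (fun k => (1 : Matrix (d k) (d k) ℂ)) = 1 := by
  have := piKronecker_diagonal (d := d) (fun _ _ => (1 : ℂ))
  simpa using this

end auxPi

lemma charpoly_conj_inv {n : Type} [Fintype n] [DecidableEq n]
    (U A V : Matrix n n ℂ) (h : U * V = 1) :
    (U * A * V).charpoly = A.charpoly := by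
  have hmap : ∀ (M N : Matrix n n ℂ),
      (M * N).map (C : ℂ →+* ℂ[X]) = M.map C * N.map C := fun M N => M.map_mul
  have hcm : charmatrix (U * A * V) = U.map C * charmatrix A * V.map C := by
    unfold charmatrix
    simp only [RingHom.mapMatrix_apply, mul_sub, sub_mul, hmap]
    congr 1
    symm
    have hcomm : Commute (Matrix.scalar n (X : ℂ[X])) (U.map C) :=
      Matrix.scalar_commute _ (fun r => Commute.all _ _) _
    calc U.map C * Matrix.scalar n (X : ℂ[X]) * V.map C
        = Matrix.scalar n (X : ℂ[X]) * (U.map C * V.map C) := by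
          rw [← hcomm.eq, mul_assoc]
      _ = Matrix.scalar n (X : ℂ[X]) := by
          rw [← hmap, h, Matrix.map_one _ (map_zero C) (map_one C), mul_one]
  have hdet1 : (U.map (C : ℂ →+* ℂ[X])).det * (V.map C).det = 1 := by
    rw [← det_mul, ← hmap, h, Matrix.map_one _ (map_zero C) (map_one C), det_one]
  unfold Matrix.charpoly
  rw [hcm, det_mul, det_mul, mul_comm, ← mul_assoc, mul_comm ((V.map C).det), hdet1, one_mul]

lemma charpoly_diag {n : Type} [Fintype n] [DecidableEq n] (v : n → ℂ) :
    (diagonal v).charpoly = ∏ i, (X - C (v i)) := by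
  have : charmatrix (diagonal v) = diagonal (fun i => X - C (v i)) := by
    ext i j
    by_cases h : i = j
    · subst h; simp
    · rw [charmatrix_apply_ne _ _ _ h, diagonal_apply_ne _ h, diagonal_apply_ne _ h, map_zero,
        neg_zero]
  rw [Matrix.charpoly, this, det_diagonal]

lemma sum_eig_eq {n : Type} [Fintype n] [DecidableEq n] {A : Matrix n n ℂ}
    (hA : A.IsHermitian) (f : n → ℝ) (U V : Matrix n n ℂ)
    (hUV : U * V = 1) (hAeq : A = U * diagonal (fun i => (f i : ℂ)) * V)
    (g : ℝ → ℝ) :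
    ∑ i, g (hA.eigenvalues i) = ∑ i, g (f i) := by
  have h1 : A.charpoly = ∏ i, (X - C ((f i : ℂ))) := by
    rw [hAeq, charpoly_conj_inv _ _ _ hUV, charpoly_diag]
  have h2 : A.charpoly = ∏ i, (X - C ((hA.eigenvalues i : ℂ))) := by
    have hsp := hA.spectral_theorem
    have hu : (hA.eigenvectorUnitary : Matrix n n ℂ) *
        star (hA.eigenvectorUnitary : Matrix n n ℂ) = 1 :=
      Matrix.mem_unitaryGroup_iff.mp hA.eigenvectorUnitary.2
    conv_lhs => rw [hsp, Unitary.conjStarAlgAut_apply]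
    rw [charpoly_conj_inv _ _ _ hu, charpoly_diag]
    rfl
  have hms : (Finset.univ.val.map fun i => ((hA.eigenvalues i : ℂ))) =
      Finset.univ.val.map fun i => ((f i : ℂ)) := by
    have h1' : ((Finset.univ.val.map fun i => ((hA.eigenvalues i : ℂ))).map
        fun a => X - C a).prod = ((Finset.univ.val.map fun i => ((f i : ℂ))).map
        fun a => X - C a).prod := by
      rw [Multiset.map_map, Multiset.map_map]
      exact h2.symm.trans h1
    calc (Finset.univ.val.map fun i => ((hA.eigenvalues i : ℂ)))
        = (((Finset.univ.val.map fun i => ((hA.eigenvalues i : ℂ))).map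
            fun a => X - C a).prod).roots := (roots_multiset_prod_X_sub_C _).symm
      _ = (((Finset.univ.val.map fun i => ((f i : ℂ))).map
            fun a => X - C a).prod).roots := by rw [h1']
      _ = _ := roots_multiset_prod_X_sub_C _
  have hmsr : (Finset.univ.val.map hA.eigenvalues) = Finset.univ.val.map f := by
    apply Multiset.map_injective (f := (Complex.ofReal : ℝ → ℂ)) Complex.ofReal_injective
    simpa [Multiset.map_map, Function.comp] using hms
  calc ∑ i, g (hA.eigenvalues i) = ((Finset.univ.val.map hA.eigenvalues).map g).sum := by
        rw [Multiset.map_map]; rfl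
    _ = ((Finset.univ.val.map f).map g).sum := by rw [hmsr]
    _ = ∑ i, g (f i) := by rw [Multiset.map_map]; rfl

lemma negMulLog_prod {κ : Type} [DecidableEq κ] (s : Finset κ) (f : κ → ℝ) :
    Real.negMulLog (∏ k ∈ s, f k) =
      ∑ k ∈ s, (∏ j ∈ s.erase k, f j) * Real.negMulLog (f k) := by
  induction s using Finset.induction_on with
  | empty => simp
  | @insert a s ha ih =>
    rw [Finset.prod_insert ha, Real.negMulLog_mul, Finset.sum_insert ha,
      Finset.erase_insert ha, ih, Finset.mul_sum]
    have h2 : ∀ k ∈ s, f a * ((∏ j ∈ s.erase k, f j) * Real.negMulLog (f k)) =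
        (∏ j ∈ (insert a s).erase k, f j) * Real.negMulLog (f k) := by
      intro k hk
      rw [Finset.erase_insert_of_ne (by rintro rfl; exact ha hk), Finset.prod_insert
        (fun h => ha (Finset.mem_of_mem_erase h))]
      ring
    rw [Finset.sum_congr rfl h2]

lemma trace_eq_sum_eig {n : Type} [Fintype n] [DecidableEq n] {A : Matrix n n ℂ}
    (hA : A.IsHermitian) : A.trace = ((∑ i, hA.eigenvalues i : ℝ) : ℂ) := by
  conv_lhs => rw [hA.spectral_theorem, Unitary.conjStarAlgAut_apply]
  rw [Matrix.trace_mul_cycle,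
    Matrix.mem_unitaryGroup_iff'.mp hA.eigenvectorUnitary.2, Matrix.one_mul,
    Matrix.trace_diagonal]
  push_cast
  rfl

/-- The iterated Kronecker product of density matrices is a density matrix, and its
von Neumann entropy is the sum of the entropies of the factors. -/
theorem entropy_piKronecker_eq_sum
    {κ : Type} [Fintype κ] [DecidableEq κ] {d : κ → Type}
    [∀ k, Fintype (d k)] [∀ k, DecidableEq (d k)] [∀ k, Nonempty (d k)]
    (ρ : ∀ k, Matrix (d k) (d k) ℂ)
    (hρ : ∀ k, (ρ k).PosSemidef) (hρtr : ∀ k, (ρ k).trace = 1) :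
    ∃ h : (piKronecker ρ).PosSemidef, (piKronecker ρ).trace = 1 ∧
      vonNeumannEntropy h.1 = ∑ k, vonNeumannEntropy (hρ k).1 := by
  set lam : ∀ k, d k → ℝ := fun k => (hρ k).1.eigenvalues with hlam
  set u : ∀ k, Matrix (d k) (d k) ℂ := fun k => ((hρ k).1.eigenvectorUnitary : _) with hu
  set Λ : (∀ k, d k) → ℝ := fun x => ∏ k, lam k (x k) with hΛ
  -- decomposition
  have hspec : ∀ k, ρ k = u k * diagonal (fun i => ((lam k i : ℂ))) * (u k)ᴴ := fun k =>
    (hρ k).1.spectral_theorem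
  have hdiag : piKronecker (fun k => diagonal (fun i => ((lam k i : ℂ)))) =
      diagonal (fun x : ∀ k, d k => ((Λ x : ℂ))) := by
    rw [piKronecker_diagonal]
    funext x
    rw [hΛ]
    push_cast
    rfl
  have hdec : piKronecker ρ =
      piKronecker u * diagonal (fun x : ∀ k, d k => ((Λ x : ℂ))) * (piKronecker u)ᴴ := by
    have hρeq : ρ = fun k => u k * diagonal (fun i => ((lam k i : ℂ))) * (u k)ᴴ :=
      funext hspec
    rw [piKronecker_conjTranspose, ← hdiag, piKronecker_mul, piKronecker_mul]
    conv_lhs => rw [hρeq]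
  have hUV : piKronecker u * (piKronecker u)ᴴ = 1 := by
    rw [piKronecker_conjTranspose, piKronecker_mul]
    have : (fun k => u k * (u k)ᴴ) = fun k => (1 : Matrix (d k) (d k) ℂ) := by
      funext k
      exact Matrix.mem_unitaryGroup_iff.mp (hρ k).1.eigenvectorUnitary.2
    rw [this, piKronecker_one]
  -- positive semidefiniteness
  have hΛnonneg : ∀ x : ∀ k, d k, 0 ≤ Λ x := fun x =>
    Finset.prod_nonneg fun k _ => (hρ k).eigenvalues_nonneg (x k)
  have hD : (diagonal (fun x : ∀ k, d k => ((Λ x : ℂ)))).PosSemidef := by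
    apply Matrix.PosSemidef.diagonal
    intro x
    show (0 : ℂ) ≤ ((Λ x : ℂ))
    exact_mod_cast hΛnonneg x
  have hPSD : (piKronecker ρ).PosSemidef := by
    rw [hdec]
    exact hD.mul_mul_conjTranspose_same _
  -- eigenvalue sums are 1
  have hsum1 : ∀ k, ∑ i, lam k i = 1 := by
    intro k
    have := (trace_eq_sum_eig (hρ k).1).symm.trans (hρtr k)
    exact_mod_cast this
  refine ⟨hPSD, ?_, ?_⟩
  · -- trace
    have : (piKronecker ρ).trace = ∏ k, (ρ k).trace := by
      simp only [Matrix.trace, Matrix.diag, piKronecker]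
      rw [sum_pi_prod fun k i => ρ k i i]
    rw [this]
    simp [hρtr]
  · -- entropy
    rw [vonNeumannEntropy, sum_eig_eq hPSD.1 Λ _ _ hUV hdec Real.negMulLog]
    have hsplit : ∀ x : ∀ k, d k, Real.negMulLog (Λ x) =
        ∑ k, (∏ j ∈ Finset.univ.erase k, lam j (x j)) * Real.negMulLog (lam k (x k)) := by
      intro x
      exact negMulLog_prod Finset.univ fun k => lam k (x k)
    rw [Finset.sum_congr rfl fun x _ => hsplit x, Finset.sum_comm]
    apply Finset.sum_congr rfl
    intro k _
    set G : ∀ j, d j → ℝ :=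
      Function.update (fun j i => lam j i) k (fun i => Real.negMulLog (lam k i)) with hG
    have hGk : G k = fun i => Real.negMulLog (lam k i) := Function.update_self _ _ _
    have hGj : ∀ j, j ≠ k → G j = fun i => lam j i := fun j hj =>
      Function.update_of_ne hj _ _
    have hterm : ∀ x : ∀ j, d j,
        (∏ j ∈ Finset.univ.erase k, lam j (x j)) * Real.negMulLog (lam k (x k)) =
        ∏ j, G j (x j) := by
      intro x
      rw [← Finset.mul_prod_erase Finset.univ (fun j => G j (x j)) (Finset.mem_univ k), hGk]
      rw [Finset.prod_congr rfl fun j hj =>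
        congrFun (hGj j (Finset.ne_of_mem_erase hj)) (x j)]
      ring
    rw [Finset.sum_congr rfl fun x _ => hterm x, sum_pi_prod_real G,
      ← Finset.mul_prod_erase Finset.univ (fun j => ∑ i, G j i) (Finset.mem_univ k), hGk]
    have hrest : ∏ j ∈ Finset.univ.erase k, (∑ i, G j i) = 1 := by
      apply Finset.prod_eq_one
      intro j hj
      rw [hGj j (Finset.ne_of_mem_erase hj)]
      exact hsum1 j
    rw [hrest, mul_one]
    rfl
end

section
/- Let φ : a₁ × b₁ → ℂ and χ : a₂ × b₂ → ℂ be unit vectors on products of finite nonempty types, and let ψ : (a₁ × a₂) × (b₁ × b₂) → ℂ be their tensor product, ψ ((i₁,i₂),(j₁,j₂)) = φ (i₁,j₁) * χ (i₂,j₂). Then the von Neumann entropy of the reduction of |ψ⟩⟨ψ| onto a₁ × a₂ equals the sum of the von Neumann entropies of the reduction of |φ⟩⟨φ| onto a₁ and of the reduction of |χ⟩⟨χ| onto a₂. (This additivity under tensor products underlies the claim that a product state |φ⟩_{A,B₁⋯B_k} ⊗ |ψ⟩_{A,B_{k+1}⋯B_m} has a combing region lying in a lower-dimensional hyperplane, signalling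 absence of genuine (m+1)-partite entanglement.) -/
open Matrix Polynomial Kronecker

lemma charpoly_unitary_conj {n : Type} [Fintype n] [DecidableEq n]
    (U : Matrix.unitaryGroup n ℂ) (M : Matrix n n ℂ) :
    ((U : Matrix n n ℂ) * M * star (U : Matrix n n ℂ)).charpoly = M.charpoly := by
  have hUU : (U : Matrix n n ℂ) * star (U : Matrix n n ℂ) = 1 :=
    (Matrix.mem_unitaryGroup_iff.mp U.2)
  set V : Matrix n n ℂ[X] := (U : Matrix n n ℂ).map C with hV
  set W : Matrix n n ℂ[X] := (star (U : Matrix n n ℂ)).map C with hW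
  have hVW : V * W = 1 := by
    rw [hV, hW, ← Matrix.map_mul, hUU]
    simp
  have hch : charmatrix ((U : Matrix n n ℂ) * M * star (U : Matrix n n ℂ))
      = V * charmatrix M * W := by
    rw [charmatrix, charmatrix]
    have hsc : V * Matrix.scalar n (X : ℂ[X]) * W = Matrix.scalar n (X : ℂ[X]) := by
      rw [mul_assoc, (Matrix.scalar_commute (X : ℂ[X]) (fun r => Commute.all _ _) W).eq,
        ← mul_assoc, hVW, one_mul]
    have hmap : ((U : Matrix n n ℂ) * M * star (U : Matrix n n ℂ)).map C
        = V * M.map C * W := by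
      rw [Matrix.map_mul, Matrix.map_mul]
    rw [RingHom.mapMatrix_apply, RingHom.mapMatrix_apply, hmap, mul_sub, sub_mul, hsc]
  rw [Matrix.charpoly, hch, det_mul, det_mul, Matrix.charpoly]
  ring_nf
  rw [mul_comm (V.det), mul_assoc, ← det_mul, hVW, det_one, mul_one]

lemma charpoly_diag_s6 (n : Type) [Fintype n] [DecidableEq n] (d : n → ℂ) :
    (Matrix.diagonal d).charpoly
      = ((Finset.univ.val.map d).map fun a => X - C a).prod := by
  have h : charmatrix (Matrix.diagonal d) = Matrix.diagonal (fun i => (X : ℂ[X]) - C (d i)) := by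
    ext i j
    by_cases hij : i = j
    · subst hij; simp
    · rw [charmatrix_apply_ne _ _ _ hij, Matrix.diagonal_apply_ne _ hij,
        Matrix.diagonal_apply_ne _ hij]
      simp
  rw [Matrix.charpoly, h, Matrix.det_diagonal, Multiset.map_map]
  rfl

lemma eigs_multiset {n : Type} [Fintype n] [DecidableEq n] {σ : Matrix n n ℂ}
    (hσ : σ.IsHermitian) (U : Matrix.unitaryGroup n ℂ) (d : n → ℝ)
    (h : σ = (U : Matrix n n ℂ) * Matrix.diagonal (fun i => (d i : ℂ))
        * star (U : Matrix n n ℂ)) :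
    Finset.univ.val.map hσ.eigenvalues = Finset.univ.val.map d := by
  have h1 : σ.charpoly = ((Finset.univ.val.map fun i => ((d i : ℂ))).map
      fun a => X - C a).prod := by
    rw [h, charpoly_unitary_conj, charpoly_diag_s6]
  have h2 : σ.charpoly = ((Finset.univ.val.map fun i => ((hσ.eigenvalues i : ℂ))).map
      fun a => X - C a).prod := by
    conv_lhs => rw [hσ.spectral_theorem, Unitary.conjStarAlgAut_apply]
    rw [charpoly_unitary_conj, charpoly_diag_s6]
    rfl
  have := congrArg Polynomial.roots (h1.symm.trans h2)
  rw [roots_multiset_prod_X_sub_C, roots_multiset_prod_X_sub_C] at this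
  have h3 : (Finset.univ.val.map hσ.eigenvalues).map (fun x : ℝ => (x : ℂ))
      = (Finset.univ.val.map d).map (fun x : ℝ => (x : ℂ)) := by
    rw [Multiset.map_map, Multiset.map_map]
    exact this.symm
  exact Multiset.map_injective Complex.ofReal_injective h3

lemma star_kronecker {m p : Type} [Fintype m] [Fintype p]
    (A : Matrix m m ℂ) (B : Matrix p p ℂ) :
    star (A ⊗ₖ B) = (star A) ⊗ₖ (star B) := by
  ext ⟨i,j⟩ ⟨k,l⟩
  simp [Matrix.star_apply, Matrix.kroneckerMap_apply, Matrix.conjTranspose_apply, mul_comm]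

lemma kronecker_mem_unitary {m p : Type} [Fintype m] [Fintype p]
    [DecidableEq m] [DecidableEq p]
    (A : Matrix.unitaryGroup m ℂ) (B : Matrix.unitaryGroup p ℂ) :
    (A : Matrix m m ℂ) ⊗ₖ (B : Matrix p p ℂ) ∈ Matrix.unitaryGroup (m × p) ℂ := by
  rw [Matrix.mem_unitaryGroup_iff, star_kronecker, ← Matrix.mul_kronecker_mul,
    Matrix.mem_unitaryGroup_iff.mp A.2, Matrix.mem_unitaryGroup_iff.mp B.2,
    Matrix.one_kronecker_one]

lemma trace_ptrace_density {a b : Type} [Fintype a] [Fintype b]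
    (φ : a × b → ℂ) (hφ : ∑ x, ‖φ x‖ ^ 2 = 1) :
    (ptraceB (densityMatrix φ)).trace = 1 := by
  rw [Matrix.trace]
  simp only [Matrix.diag_apply, ptraceB, densityMatrix]
  rw [← Fintype.sum_prod_type']
  have : ∀ x : a × b, φ x * star (φ x) = ((‖φ x‖ ^ 2 : ℝ) : ℂ) := by
    intro x
    rw [show star (φ x) = (starRingEnd ℂ) (φ x) from rfl, Complex.mul_conj']
    norm_cast
  simp_rw [this]
  rw [← Complex.ofReal_sum, hφ, Complex.ofReal_one]

lemma sum_eigs_eq_one {a : Type} [Fintype a] [DecidableEq a]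
    {σ : Matrix a a ℂ} (hσ : σ.IsHermitian) (htr : σ.trace = 1) :
    ∑ i, hσ.eigenvalues i = 1 := by
  have h := hσ.spectral_theorem
  have h2 : σ.trace = ∑ i, ((hσ.eigenvalues i : ℂ)) := by
    conv_lhs => rw [h, Unitary.conjStarAlgAut_apply]
    rw [Matrix.trace_mul_cycle]
    rw [show (star (hσ.eigenvectorUnitary : Matrix a a ℂ)) * (hσ.eigenvectorUnitary : Matrix a a ℂ)
      = 1 from Matrix.UnitaryGroup.star_mul_self _, Matrix.one_mul, Matrix.trace_diagonal]
    rfl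
  rw [htr] at h2
  have : ((∑ i, hσ.eigenvalues i : ℝ) : ℂ) = 1 := by push_cast; rw [← h2]
  exact_mod_cast this

/-- For a tensor product `ψ = φ ⊗ χ` of pure bipartite states, the entropy of the
reduction onto `a₁ × a₂` is the sum of the entropies of the reductions of the
factors onto `a₁` and `a₂` respectively. -/
theorem entropy_reduction_tensor_eq_add
    {a₁ b₁ a₂ b₂ : Type}
    [Fintype a₁] [DecidableEq a₁] [Nonempty a₁]
    [Fintype b₁] [DecidableEq b₁] [Nonempty b₁]
    [Fintype a₂] [DecidableEq a₂] [Nonempty a₂]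
    [Fintype b₂] [DecidableEq b₂] [Nonempty b₂]
    (φ : a₁ × b₁ → ℂ) (hφ : ∑ x, ‖φ x‖ ^ 2 = 1)
    (χ : a₂ × b₂ → ℂ) (hχ : ∑ x, ‖χ x‖ ^ 2 = 1)
    (ψ : (a₁ × a₂) × (b₁ × b₂) → ℂ)
    (hψ : ∀ i₁ i₂ j₁ j₂, ψ ((i₁, i₂), (j₁, j₂)) = φ (i₁, j₁) * χ (i₂, j₂))
    (hψA : (ptraceB (densityMatrix ψ)).IsHermitian)
    (hφA : (ptraceB (densityMatrix φ)).IsHermitian)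
    (hχA : (ptraceB (densityMatrix χ)).IsHermitian) :
    vonNeumannEntropy hψA = vonNeumannEntropy hφA + vonNeumannEntropy hχA := by
  -- the reduced state is the Kronecker product of the reduced factors
  have hprod : ptraceB (densityMatrix ψ)
      = (ptraceB (densityMatrix φ)) ⊗ₖ (ptraceB (densityMatrix χ)) := by
    ext ⟨i₁, i₂⟩ ⟨j₁, j₂⟩
    simp only [ptraceB, densityMatrix, Matrix.kroneckerMap_apply, Fintype.sum_prod_type]
    rw [Finset.sum_mul_sum]
    refine Finset.sum_congr rfl fun k₁ _ => Finset.sum_congr rfl fun k₂ _ => ?_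
    rw [hψ i₁ i₂ k₁ k₂, hψ j₁ j₂ k₁ k₂, star_mul']
    ring
  set eφ := hφA.eigenvalues
  set eχ := hχA.eigenvalues
  -- unitary diagonalization of the Kronecker product
  set U₁ := hφA.eigenvectorUnitary
  set U₂ := hχA.eigenvectorUnitary
  set U : Matrix.unitaryGroup (a₁ × a₂) ℂ :=
    ⟨(U₁ : Matrix a₁ a₁ ℂ) ⊗ₖ (U₂ : Matrix a₂ a₂ ℂ), kronecker_mem_unitary U₁ U₂⟩ with hU
  set d : a₁ × a₂ → ℝ := fun p => eφ p.1 * eχ p.2 with hd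
  have hdiag : ptraceB (densityMatrix ψ)
      = (U : Matrix (a₁ × a₂) (a₁ × a₂) ℂ) * Matrix.diagonal (fun p => ((d p : ℂ)))
        * star (U : Matrix (a₁ × a₂) (a₁ × a₂) ℂ) := by
    rw [hprod]
    conv_lhs => rw [hφA.spectral_theorem, hχA.spectral_theorem, Unitary.conjStarAlgAut_apply,
      Unitary.conjStarAlgAut_apply]
    rw [Matrix.mul_kronecker_mul, Matrix.mul_kronecker_mul,
      Matrix.diagonal_kronecker_diagonal]
    congr 1
    · congr 1
      ext p
      simp [hd, Function.comp, eφ, eχ]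
    · rw [hU, ← star_kronecker]
  have hmult := eigs_multiset hψA U d hdiag
  -- entropy of the Kronecker product
  have hS : vonNeumannEntropy hψA = ∑ p : a₁ × a₂, Real.negMulLog (d p) := by
    show ∑ i, Real.negMulLog (hψA.eigenvalues i) = _
    have e1 : ∑ i, Real.negMulLog (hψA.eigenvalues i)
        = ((Finset.univ.val.map hψA.eigenvalues).map Real.negMulLog).sum := by
      rw [Multiset.map_map]; rfl
    have e2 : ∑ p : a₁ × a₂, Real.negMulLog (d p)
        = ((Finset.univ.val.map d).map Real.negMulLog).sum := by
      rw [Multiset.map_map]; rfl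
    rw [e1, e2, hmult]
  -- traces of the factors
  have hφtr : ∑ i, eφ i = 1 := sum_eigs_eq_one hφA (trace_ptrace_density φ hφ)
  have hχtr : ∑ j, eχ j = 1 := sum_eigs_eq_one hχA (trace_ptrace_density χ hχ)
  rw [hS]
  rw [Fintype.sum_prod_type]
  simp_rw [hd, Real.negMulLog_mul, Finset.sum_add_distrib, ← Finset.sum_mul, ← Finset.mul_sum,
    hχtr]
  rw [← Finset.sum_mul, hφtr, one_mul]
  simp [vonNeumannEntropy, Finset.sum_add_distrib, eφ, eχ]
end
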